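/- Let k be a positive integer and r ∈ [k]. The number of k×k permutation matrices that have an r-repetition (i.e., some nonzero vector (d,d') occurs as the distance vector of at least r pairs of 1-entries) is at most 2·k²·k!/r!. -/

import Mathlib

open Asymptotics

noncomputable section

/-- Number of 1-entries of a binary matrix. -/
def ones {n m : ℕ} (A : Fin n → Fin m → Bool) : ℕ :=
  Nat.card {p : Fin n × Fin m // A p.1 p.2 = true}

/-- Number of 0-entries of a binary matrix. -/
def zeros {n m : ℕ} (A : Fin n → Fin m → Bool) : ℕ :=
  Nat.card {p : Fin n × Fin m // A p.1 p.2 = false}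

/-- `B` is contained in `A`: `B` can be obtained from `A` by deleting rows/columns
and turning some 1-entries into 0-entries. -/
def containsB {a b n m : ℕ} (B : Fin a → Fin b → Bool) (A : Fin n → Fin m → Bool) : Prop :=
  ∃ f : Fin a → Fin n, ∃ g : Fin b → Fin m, StrictMono f ∧ StrictMono g ∧
    ∀ i j, B i j = true → A (f i) (g j) = true

/-- The permutation matrix of a permutation `σ`. -/
def permMat {k : ℕ} (σ : Equiv.Perm (Fin k)) : Fin k → Fin k → Bool :=
  fun i j => decide (σ i = j)

/-- `A` contains the permutation matrix of `σ`. -/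
def containsP {k n m : ℕ} (σ : Equiv.Perm (Fin k)) (A : Fin n → Fin m → Bool) : Prop :=
  containsB (permMat σ) A

/-- `ex(n,P)`: the maximum number of 1-entries in an `n × n` binary matrix avoiding
the permutation matrix of `σ`. -/
def exP {k : ℕ} (n : ℕ) (σ : Equiv.Perm (Fin k)) : ℕ :=
  sSup {c : ℕ | ∃ A : Fin n → Fin n → Bool, ¬ containsP σ A ∧ c = ones A}

/-- The number of (ordered) pairs of 1-entries of the permutation matrix of `σ`
whose distance vector is `(d, d')`. -/
def pairCount {k : ℕ} (σ : Equiv.Perm (Fin k)) (d d' : ℤ) : ℕ :=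
  Nat.card {p : Fin k × Fin k //
    ((p.2).val : ℤ) - ((p.1).val : ℤ) = d ∧ ((σ p.2).val : ℤ) - ((σ p.1).val : ℤ) = d'}

open Finset

/-- constraint condition -/
def Cond {k : ℕ} (d : ℕ) (d' : ℤ) (T : Finset (Fin k)) (σ : Equiv.Perm (Fin k)) : Prop :=
  ∀ i ∈ T, ∃ j : Fin k, j.val = i.val + d ∧ ((σ j).val : ℤ) = ((σ i).val : ℤ) + d'

lemma key {k : ℕ} (d : ℕ) (d' : ℤ) (hd' : 0 < d') (T : Finset (Fin k))
    (σ₁ σ₂ : Equiv.Perm (Fin k))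
    (h1 : Cond d d' T σ₁) (h2 : Cond d d' T σ₂)
    (hpat : ∀ x y : Fin k, ¬(∃ i ∈ T, x.val = i.val + d) → ¬(∃ i ∈ T, y.val = i.val + d) →
      ((σ₁ x).val < (σ₁ y).val ↔ (σ₂ x).val < (σ₂ y).val)) :
    σ₁ = σ₂ := by
  have core : ∀ (τ₁ τ₂ : Equiv.Perm (Fin k)), Cond d d' T τ₁ → Cond d d' T τ₂ →
      (∀ x y : Fin k, ¬(∃ i ∈ T, x.val = i.val + d) → ¬(∃ i ∈ T, y.val = i.val + d) →
        ((τ₁ x).val < (τ₁ y).val ↔ (τ₂ x).val < (τ₂ y).val)) →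
      ∀ v : ℕ, (∀ w, w < v → ∀ x, (τ₁ x).val = w → τ₂ x = τ₁ x) →
        (∀ w, w < v → ∀ x, (τ₂ x).val = w → τ₁ x = τ₂ x) →
      ∀ x, (τ₁ x).val = v → τ₂ x = τ₁ x := by
    intro τ₁ τ₂ hc1 hc2 hp v ih1 ih2 x hx
    by_cases hxB : ∃ i ∈ T, x.val = i.val + d
    · obtain ⟨i, hiT, hix⟩ := hxB
      obtain ⟨j, hj, hv1⟩ := hc1 i hiT
      have hjx : j = x := Fin.ext (by omega)
      rw [hjx] at hv1
      obtain ⟨j2, hj2, hv2⟩ := hc2 i hiT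
      have hj2x : j2 = x := Fin.ext (by omega)
      rw [hj2x] at hv2
      have hw : (τ₁ i).val < v := by omega
      have he' : (τ₂ i).val = (τ₁ i).val := by rw [ih1 _ hw i rfl]
      exact Fin.ext (by omega)
    · obtain ⟨y, hyv⟩ : ∃ y, τ₂ y = τ₁ x := ⟨τ₂.symm (τ₁ x), Equiv.apply_symm_apply _ _⟩
      have hyval : (τ₂ y).val = v := by rw [hyv]; exact hx
      by_cases hyB : ∃ i ∈ T, y.val = i.val + d
      · obtain ⟨i, hiT, hiy⟩ := hyB
        obtain ⟨j, hj, hv2⟩ := hc2 i hiT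
        have hjy : j = y := Fin.ext (by omega)
        rw [hjy] at hv2
        have hw : (τ₂ i).val < v := by omega
        have he' : (τ₁ i).val = (τ₂ i).val := by rw [ih2 _ hw i rfl]
        obtain ⟨j1, hj1, hv1⟩ := hc1 i hiT
        have hj1y : j1 = y := Fin.ext (by omega)
        rw [hj1y] at hv1
        have hxy : τ₁ y = τ₁ x := Fin.ext (by omega)
        have hyx : y = x := τ₁.injective hxy
        exact absurd ⟨i, hiT, by omega⟩ hxB
      · rcases lt_trichotomy ((τ₁ y).val) v with hlt | heq | hgt
        · have he : τ₂ y = τ₁ y := ih1 _ hlt y rfl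
          have h' : τ₁ x = τ₁ y := by rw [← hyv, he]
          have hxy : x = y := τ₁.injective h'
          rw [hxy, hyv, ← h', hxy]
        · have h' : τ₁ y = τ₁ x := Fin.ext (by omega)
          have hxy : y = x := τ₁.injective h'
          rw [← hxy, hyv, ← h', hxy]
        · have h1lt : (τ₁ x).val < (τ₁ y).val := by omega
          have h2lt : (τ₂ x).val < (τ₂ y).val := (hp x y hxB hyB).1 h1lt
          have hw : (τ₂ x).val < v := by omega
          exact (ih2 _ hw x rfl).symm
  have main : ∀ v : ℕ, (∀ x, (σ₁ x).val = v → σ₂ x = σ₁ x) ∧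
      (∀ x, (σ₂ x).val = v → σ₁ x = σ₂ x) := by
    intro v
    induction v using Nat.strong_induction_on with
    | _ v IH =>
      constructor
      · exact core σ₁ σ₂ h1 h2 hpat v (fun w hw => (IH w hw).1) (fun w hw => (IH w hw).2)
      · exact core σ₂ σ₁ h2 h1 (fun x y hx hy => (hpat x y hx hy).symm) v
          (fun w hw => (IH w hw).2) (fun w hw => (IH w hw).1)
  exact Equiv.ext fun x => ((main (σ₁ x).val).1 x rfl).symm

instance {k : ℕ} (d : ℕ) (d' : ℤ) (T : Finset (Fin k)) (σ : Equiv.Perm (Fin k)) :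
    Decidable (Cond d d' T σ) := by unfold Cond; infer_instance

lemma claimB_pos {k : ℕ} (r d : ℕ) (d' : ℤ) (hd' : 0 < d')
    (T : Finset (Fin k)) (hT : T.card = r) :
    (univ.filter fun σ : Equiv.Perm (Fin k) => Cond d d' T σ).card ≤ (k - r).factorial := by
  classical
  by_cases hvalid : ∀ i ∈ T, i.val + d < k
  · set B : Finset (Fin k) := univ.filter (fun x => ∃ i ∈ T, x.val = i.val + d) with hBdef
    have hBcard : B.card = r := by
      rw [← hT]
      have himg : B = T.image (fun i => if h : i.val + d < k then (⟨i.val + d, h⟩ : Fin k) else i) := by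
        ext x
        simp only [hBdef, mem_filter, mem_univ, true_and, mem_image]
        constructor
        · rintro ⟨i, hi, hx⟩
          exact ⟨i, hi, by rw [dif_pos (hvalid i hi)]; exact Fin.ext hx.symm⟩
        · rintro ⟨i, hi, hx⟩
          refine ⟨i, hi, ?_⟩
          rw [dif_pos (hvalid i hi)] at hx
          rw [← hx]
      rw [himg]
      apply Finset.card_image_of_injOn
      intro i hi j hj he
      simp only at he
      rw [dif_pos (hvalid i (Finset.mem_coe.1 hi)), dif_pos (hvalid j (Finset.mem_coe.1 hj))] at he
      have hv : i.val + d = j.val + d := by simpa using congrArg Fin.val he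
      exact Fin.ext (by omega)
    set R : Finset (Fin k) := Bᶜ with hRdef
    have hR : R.card = k - r := by
      rw [hRdef, Finset.card_compl, hBcard, Fintype.card_fin]
    set m := k - r with hm
    have hRmem : ∀ x : Fin k, x ∈ R ↔ ¬(∃ i ∈ T, x.val = i.val + d) := by
      intro x; simp [hRdef, hBdef]
    set rnk : Equiv.Perm (Fin k) → Fin k → ℕ :=
      fun σ x => (R.filter fun z => (σ z).val < (σ x).val).card with hrnk
    have hrank_lt : ∀ σ x, x ∈ R → rnk σ x < m := by
      intro σ x hx
      rw [← hR]
      apply Finset.card_lt_card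
      rw [Finset.ssubset_iff_of_subset (Finset.filter_subset _ _)]
      exact ⟨x, hx, by simp⟩
    have hrank_mono : ∀ σ x y, x ∈ R → (σ x).val < (σ y).val → rnk σ x < rnk σ y := by
      intro σ x y hx hxy
      apply Finset.card_lt_card
      constructor
      · intro z hz
        rw [Finset.mem_filter] at hz ⊢
        exact ⟨hz.1, hz.2.trans hxy⟩
      · intro hsub
        have := hsub (Finset.mem_filter.2 ⟨hx, hxy⟩)
        rw [Finset.mem_filter] at this
        omega
    have hrank_iff : ∀ σ x y, x ∈ R → y ∈ R →
        ((σ x).val < (σ y).val ↔ rnk σ x < rnk σ y) := by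
      intro σ x y hx hy
      constructor
      · exact hrank_mono σ x y hx
      · intro h
        by_contra hc
        rcases Nat.lt_or_ge (σ y).val (σ x).val with h' | h'
        · exact absurd (hrank_mono σ y x hy h') (by omega)
        · have he : (σ x).val = (σ y).val := by omega
          have hxy : x = y := σ.injective (Fin.ext he)
          rw [hxy] at h
          exact lt_irrefl _ h
    set emb := R.orderEmbOfFin hR with hemb
    have hembmem : ∀ a : Fin (k - r), emb a ∈ R := fun a => Finset.orderEmbOfFin_mem R hR a
    have hembsurj : ∀ x ∈ R, ∃ a, emb a = x := by
      intro x hx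
      have : x ∈ Set.range (R.orderEmbOfFin hR) := by
        rw [Finset.range_orderEmbOfFin]; exact_mod_cast hx
      exact this
    set Φ : Equiv.Perm (Fin k) → (Fin m ↪ Fin m) := fun σ =>
      ⟨fun a => ⟨rnk σ (emb a), hrank_lt σ _ (hembmem a)⟩, by
        intro a b hab
        have hv : rnk σ (emb a) = rnk σ (emb b) := congrArg Fin.val hab
        have he : (σ (emb a)).val = (σ (emb b)).val := by
          by_contra hne
          rcases Nat.lt_or_ge (σ (emb a)).val (σ (emb b)).val with h' | h'
          · have := hrank_mono σ _ _ (hembmem a) h'; omega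
          · have h'' : (σ (emb b)).val < (σ (emb a)).val := by omega
            have := hrank_mono σ _ _ (hembmem b) h''; omega
        exact emb.injective (σ.injective (Fin.ext he))⟩ with hΦ
    calc (univ.filter fun σ : Equiv.Perm (Fin k) => Cond d d' T σ).card
        ≤ (univ : Finset (Fin m ↪ Fin m)).card := by
          apply Finset.card_le_card_of_injOn Φ (fun _ _ => Finset.mem_univ _)
          intro σ₁ hσ₁ σ₂ hσ₂ hΦeq
          have hc1 : Cond d d' T σ₁ := (Finset.mem_filter.1 hσ₁).2
          have hc2 : Cond d d' T σ₂ := (Finset.mem_filter.1 hσ₂).2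
          have hrnkeq : ∀ x ∈ R, rnk σ₁ x = rnk σ₂ x := by
            intro x hx
            obtain ⟨a, ha⟩ := hembsurj x hx
            have := congrArg (fun f : Fin m ↪ Fin m => (f a).val) hΦeq
            rw [← ha]; exact this
          apply key d d' hd' T σ₁ σ₂ hc1 hc2
          intro x y hxB hyB
          have hx : x ∈ R := (hRmem x).2 hxB
          have hy : y ∈ R := (hRmem y).2 hyB
          rw [hrank_iff σ₁ x y hx hy, hrnkeq x hx, hrnkeq y hy, ← hrank_iff σ₂ x y hx hy]
      _ = (k - r).factorial := by
          rw [Finset.card_univ, Fintype.card_embedding_eq, Fintype.card_fin]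
          exact Nat.descFactorial_self m
  · have hempty : (univ.filter fun σ : Equiv.Perm (Fin k) => Cond d d' T σ) = ∅ := by
      apply Finset.filter_eq_empty_iff.2
      intro σ _ hcond
      push_neg at hvalid
      obtain ⟨i, hiT, hbad⟩ := hvalid
      obtain ⟨j, hj, _⟩ := hcond i hiT
      omega
    rw [hempty]
    simp

lemma cond_rev_iff {k : ℕ} (d : ℕ) (d' : ℤ) (T : Finset (Fin k)) (σ : Equiv.Perm (Fin k)) :
    Cond d d' T σ ↔ Cond d (-d') T (Fin.revPerm * σ) := by
  constructor <;> intro h i hi <;> obtain ⟨j, hj, hv⟩ := h i hi <;> refine ⟨j, hj, ?_⟩ <;>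
    have b1 : (σ j).val < k := (σ j).isLt <;> have b2 : (σ i).val < k := (σ i).isLt <;>
    simp only [Equiv.Perm.mul_apply, Fin.revPerm_apply, Fin.val_rev] at hv ⊢ <;> omega

lemma claimB {k : ℕ} (r d : ℕ) (d' : ℤ) (hr : 1 ≤ r) (hd : 1 ≤ d)
    (T : Finset (Fin k)) (hT : T.card = r) :
    (univ.filter fun σ : Equiv.Perm (Fin k) => Cond d d' T σ).card ≤ (k - r).factorial := by
  rcases lt_trichotomy d' 0 with hneg | hzero | hpos
  · have hflip : (univ.filter fun σ : Equiv.Perm (Fin k) => Cond d d' T σ).card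
        = (univ.filter fun σ : Equiv.Perm (Fin k) => Cond d (-d') T σ).card := by
      apply Finset.card_equiv (Equiv.mulLeft (Fin.revPerm))
      intro σ
      simp only [Finset.mem_filter, Finset.mem_univ, true_and, Equiv.coe_mulLeft]
      exact cond_rev_iff d d' T σ
    rw [hflip]
    exact claimB_pos r d (-d') (by omega) T hT
  · subst hzero
    have hempty : (univ.filter fun σ : Equiv.Perm (Fin k) => Cond d 0 T σ) = ∅ := by
      apply Finset.filter_eq_empty_iff.2
      intro σ _ hcond
      obtain ⟨i, hiT⟩ := Finset.card_pos.1 (by omega : 0 < T.card)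
      obtain ⟨j, hj, hv⟩ := hcond i hiT
      have h1 : σ j = σ i := Fin.ext (by omega)
      have h2 : j = i := σ.injective h1
      rw [h2] at hj
      omega
    rw [hempty]
    simp
  · exact claimB_pos r d d' hpos T hT

lemma pairCount_eq {k : ℕ} (σ : Equiv.Perm (Fin k)) (d d' : ℤ) :
    pairCount σ d d' = (univ.filter fun p : Fin k × Fin k =>
      ((p.2).val : ℤ) - ((p.1).val : ℤ) = d ∧ ((σ p.2).val : ℤ) - ((σ p.1).val : ℤ) = d').card := by
  rw [pairCount, Nat.card_eq_fintype_card, Fintype.card_subtype]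

lemma pairCount_swap {k : ℕ} (σ : Equiv.Perm (Fin k)) (d d' : ℤ) :
    pairCount σ d d' = pairCount σ (-d) (-d') := by
  rw [pairCount_eq, pairCount_eq]
  apply Finset.card_equiv (Equiv.prodComm _ _)
  intro p
  simp only [Finset.mem_filter, Finset.mem_univ, true_and, Equiv.prodComm_apply, Prod.fst_swap,
    Prod.snd_swap]
  constructor <;> rintro ⟨h1, h2⟩ <;> constructor <;> omega

/-- The number of `k`-permutation matrices having an `r`-repetition is at most `2·k²·k!/r!`. -/
theorem stmt1 (k : ℕ) (hk : 1 ≤ k) (r : ℕ) (hr1 : 1 ≤ r) (hr2 : r ≤ k) :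
    Nat.card {σ : Equiv.Perm (Fin k) //
        ∃ d d' : ℤ, ¬ (d = 0 ∧ d' = 0) ∧ r ≤ pairCount σ d d'} ≤
      2 * k ^ 2 * (k.factorial / r.factorial) := by
  classical
  set P : Equiv.Perm (Fin k) → Prop :=
    fun σ => ∃ d d' : ℤ, ¬ (d = 0 ∧ d' = 0) ∧ r ≤ pairCount σ d d' with hP
  have hcard : Nat.card {σ : Equiv.Perm (Fin k) // P σ} = (univ.filter P).card := by
    rw [Nat.card_eq_fintype_card, Fintype.card_subtype]
  rw [hcard]
  set G : Finset (ℕ × ℤ × Finset (Fin k)) :=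
    (Finset.Icc 1 (k-1)) ×ˢ ((Finset.Icc (1 - (k:ℤ)) ((k:ℤ) - 1)) ×ˢ (univ.powersetCard r))
    with hG
  have hsub : univ.filter P ⊆ G.biUnion (fun g =>
      univ.filter fun σ : Equiv.Perm (Fin k) => Cond g.1 g.2.1 g.2.2 σ) := by
    intro σ hσ
    obtain ⟨d, d', hne, hcnt⟩ := (Finset.mem_filter.1 hσ).2
    -- reduce to d > 0
    have hmain : ∀ (D E : ℤ), 0 < D → r ≤ pairCount σ D E →
        σ ∈ G.biUnion (fun g =>
          univ.filter fun σ : Equiv.Perm (Fin k) => Cond g.1 g.2.1 g.2.2 σ) := by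
      intro D E hD hcnt
      set A := (univ.filter fun p : Fin k × Fin k =>
        ((p.2).val : ℤ) - ((p.1).val : ℤ) = D ∧ ((σ p.2).val : ℤ) - ((σ p.1).val : ℤ) = E)
        with hA
      have hAr : r ≤ A.card := by rw [← pairCount_eq]; exact hcnt
      obtain ⟨p0, hp0⟩ := Finset.card_pos.1 (by omega : 0 < A.card)
      have hp0' := (Finset.mem_filter.1 hp0).2
      have hb1 : (p0.1).val < k := (p0.1).isLt
      have hb2 : (p0.2).val < k := (p0.2).isLt
      have hb3 : ((σ p0.1)).val < k := ((σ p0.1)).isLt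
      have hb4 : ((σ p0.2)).val < k := ((σ p0.2)).isLt
      -- bounds
      have hDle : D ≤ (k:ℤ) - 1 := by omega
      have hEbounds : 1 - (k:ℤ) ≤ E ∧ E ≤ (k:ℤ) - 1 := by omega
      set dn : ℕ := D.toNat with hdn
      have hdn1 : 1 ≤ dn := by omega
      have hdnk : dn ≤ k - 1 := by omega
      -- image of first components
      have himg : (A.image Prod.fst).card = A.card := by
        apply Finset.card_image_of_injOn
        intro p hp q hq hpq
        have hp' := (Finset.mem_filter.1 (Finset.mem_coe.1 hp)).2
        have hq' := (Finset.mem_filter.1 (Finset.mem_coe.1 hq)).2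
        have : (p.2).val = (q.2).val := by omega
        exact Prod.ext hpq (Fin.ext this)
      obtain ⟨T, hTsub, hTcard⟩ := Finset.exists_subset_card_eq (s := A.image Prod.fst) (n := r)
        (by omega : r ≤ (A.image Prod.fst).card)
      apply Finset.mem_biUnion.2
      refine ⟨(dn, E, T), ?_, ?_⟩
      · rw [hG]
        rw [Finset.mem_product]
        constructor
        · rw [Finset.mem_Icc]; exact ⟨hdn1, hdnk⟩
        · rw [Finset.mem_product]
          constructor
          · rw [Finset.mem_Icc]; exact hEbounds
          · rw [Finset.mem_powersetCard]
            exact ⟨Finset.subset_univ T, hTcard⟩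
      · rw [Finset.mem_filter]
        refine ⟨Finset.mem_univ _, ?_⟩
        dsimp only
        have hdnD : (dn : ℤ) = D := by omega
        intro i hi
        obtain ⟨p, hpA, hpi⟩ := Finset.mem_image.1 (hTsub hi)
        have hp' := (Finset.mem_filter.1 hpA).2
        refine ⟨p.2, ?_, ?_⟩
        · have c1 : (p.1).val < k := (p.1).isLt
          have c2 : (p.2).val < k := (p.2).isLt
          rw [← hpi]
          omega
        · rw [← hpi]
          omega
    -- get a witness to rule out d = 0 and handle signs
    have hpos0 : 0 < (univ.filter fun p : Fin k × Fin k =>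
        ((p.2).val : ℤ) - ((p.1).val : ℤ) = d ∧ ((σ p.2).val : ℤ) - ((σ p.1).val : ℤ) = d').card := by
      rw [← pairCount_eq]; omega
    obtain ⟨p0, hp0⟩ := Finset.card_pos.1 hpos0
    have hp0' := (Finset.mem_filter.1 hp0).2
    rcases lt_trichotomy d 0 with hd | hd | hd
    · exact hmain (-d) (-d') (by omega) (by rw [← pairCount_swap]; exact hcnt)
    · exfalso
      subst hd
      have : p0.2 = p0.1 := Fin.ext (by omega)
      rw [this] at hp0'
      exact hne ⟨rfl, by omega⟩
    · exact hmain d d' hd hcnt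
  calc (univ.filter P).card
      ≤ (G.biUnion (fun g =>
          univ.filter fun σ : Equiv.Perm (Fin k) => Cond g.1 g.2.1 g.2.2 σ)).card :=
        Finset.card_le_card hsub
    _ ≤ ∑ g ∈ G, (univ.filter fun σ : Equiv.Perm (Fin k) => Cond g.1 g.2.1 g.2.2 σ).card :=
        Finset.card_biUnion_le
    _ ≤ ∑ g ∈ G, (k - r).factorial := by
        apply Finset.sum_le_sum
        intro g hg
        rw [hG, Finset.mem_product] at hg
        obtain ⟨hg1, hg2⟩ := hg
        rw [Finset.mem_product, Finset.mem_Icc] at hg2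
        rw [Finset.mem_Icc] at hg1
        have hTc : g.2.2.card = r := (Finset.mem_powersetCard.1 hg2.2).2
        exact claimB r g.1 g.2.1 hr1 hg1.1 g.2.2 hTc
    _ = G.card * (k - r).factorial := by rw [Finset.sum_const, smul_eq_mul]
    _ ≤ 2 * k ^ 2 * (k.factorial / r.factorial) := by
        have hGcard : G.card = (k - 1) * ((2 * k - 1) * Nat.choose k r) := by
          rw [hG, Finset.card_product, Finset.card_product, Nat.card_Icc, Int.card_Icc,
            Finset.card_powersetCard, Finset.card_univ, Fintype.card_fin]
          have h2 : ((k:ℤ) - 1 + 1 - (1 - (k:ℤ))).toNat = 2 * k - 1 := by omega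
          rw [h2]
          congr 1
        have hdiv : k.factorial / r.factorial = Nat.choose k r * (k - r).factorial := by
          have h1 : Nat.choose k r * r.factorial * (k - r).factorial = k.factorial :=
            Nat.choose_mul_factorial_mul_factorial hr2
          have h2 : k.factorial = (Nat.choose k r * (k - r).factorial) * r.factorial := by
            rw [← h1]; ring
          rw [h2]
          exact Nat.mul_div_cancel _ (Nat.factorial_pos r)
        rw [hGcard, hdiv]
        have step : (k - 1) * ((2 * k - 1) * Nat.choose k r) * (k - r).factorial
            = ((k - 1) * (2 * k - 1)) * (Nat.choose k r * (k - r).factorial) := by ring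
        rw [step]
        apply Nat.mul_le_mul_right
        calc (k - 1) * (2 * k - 1) ≤ k * (2 * k) :=
              Nat.mul_le_mul (by omega) (by omega)
          _ = 2 * k ^ 2 := by ring
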